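/- Let k be a field, r ≥ 1 an integer, and V₁,…,V_r finite-dimensional k-vector spaces. Let T_i : V_i → V_{i+1} be linear maps for 1 ≤ i ≤ r (with V_{r+1} = V₁), and let g : V₁ → V₁ be a linear map. Let Φ be the linear endomorphism of V₁ ⊗ V₂ ⊗ ⋯ ⊗ V_r determined by Φ(v₁ ⊗ v₂ ⊗ ⋯ ⊗ v_r) = g(T_r(v_r)) ⊗ T₁(v₁) ⊗ T₂(v₂) ⊗ ⋯ ⊗ T_{r−1}(v_{r−1}). Then Tr(Φ) = Tr(g ∘ T_r ∘ T_{r−1} ∘ ⋯ ∘ T₁ : V₁ → V₁). -/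

import Mathlib

namespace Stmt9Aux

open PiTensorProduct Module Fin.NatCast

theorem heq_app {ι : Sort*} {α : ι → Sort*} (f : ∀ i, α i) {i i' : ι} (h : i = i') :
    HEq (f i) (f i') := by subst h; rfl

/-! ### generic chain lemma -/

section Chain

variable (k : Type*) [Field k]

variable {κ : ℕ → Type*} [∀ n, Fintype (κ n)]

noncomputable def chainVec (F : ∀ t : ℕ, κ t → κ (t+1) → k) (w : κ 0 → k) :
    ∀ n, κ n → k
  | 0 => w
  | (n+1) => fun y => ∑ z, chainVec F w n z * F n z y

theorem chain (F : ∀ t : ℕ, κ t → κ (t+1) → k) :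
    ∀ (N : ℕ) (w : κ 0 → k) (ψ : κ N → k),
    ∑ f : (t : Fin (N+1)) → κ t.val,
      (w (f ⟨0, Nat.succ_pos N⟩) * ∏ t : Fin N, F t.val (f t.castSucc) (f t.succ))
        * ψ (f ⟨N, Nat.lt_succ_self N⟩)
    = ∑ z : κ N, chainVec k F w N z * ψ z := by
  intro N
  induction N with
  | zero =>
    intro w ψ
    rw [← Equiv.sum_comp
      (⟨fun f => f ⟨0, Nat.one_pos⟩,
        fun z t => _root_.cast (congrArg κ (show (0:ℕ) = t.val by omega)) z,
        by intro f; funext t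
           have ht : t = ⟨0, Nat.one_pos⟩ := by apply Fin.ext; omega
           subst ht; rfl,
        by intro z; rfl⟩ : ((t : Fin 1) → κ t.val) ≃ κ 0)
      (fun z => chainVec k F w 0 z * ψ z)]
    refine Finset.sum_congr rfl (fun f _ => ?_)
    show (w (f ⟨0, Nat.one_pos⟩) * ∏ t : Fin 0, F t.val (f t.castSucc) (f t.succ))
        * ψ (f ⟨0, Nat.one_pos⟩)
      = chainVec k F w 0 (f ⟨0, Nat.one_pos⟩) * ψ (f ⟨0, Nat.one_pos⟩)
    rw [Fin.prod_univ_zero, mul_one]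
    rfl
  | succ N IH =>
    intro w ψ
    set e := Fin.snocEquiv (fun t : Fin (N+2) => κ t.val) with he
    rw [← Equiv.sum_comp e, Fintype.sum_prod_type]
    have key : ∀ (z : κ (N+1)) (f' : (t : Fin (N+1)) → κ t.val),
        (w ((e (z, f')) ⟨0, Nat.succ_pos (N+1)⟩) *
          ∏ t : Fin (N+1), F t.val ((e (z, f')) t.castSucc) ((e (z, f')) t.succ))
            * ψ ((e (z, f')) ⟨N+1, Nat.lt_succ_self (N+1)⟩)
        = ((w (f' ⟨0, Nat.succ_pos N⟩) *
            ∏ t : Fin N, F t.val (f' t.castSucc) (f' t.succ))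
          * (F N (f' ⟨N, Nat.lt_succ_self N⟩) z * ψ z)) := by
      intro z f'
      have h0 : (e (z, f')) ⟨0, Nat.succ_pos (N+1)⟩ = f' ⟨0, Nat.succ_pos N⟩ := by
        exact Fin.snoc_castSucc (α := fun t : Fin (N+2) => κ t.val) (p := f') (x := z) (i := ⟨0, Nat.succ_pos N⟩)
      have hlast : (e (z, f')) ⟨N+1, Nat.lt_succ_self (N+1)⟩ = z := by
        exact Fin.snoc_last (α := fun t : Fin (N+2) => κ t.val) (p := f') (x := z)
      have hcs : ∀ t : Fin (N+1), (e (z, f')) t.castSucc = f' t := fun t =>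
        Fin.snoc_castSucc (α := fun t : Fin (N+2) => κ t.val) (p := f') (x := z) (i := t)
      rw [h0, hlast, Fin.prod_univ_castSucc
        (f := fun t : Fin (N+1) => F t.val ((e (z, f')) t.castSucc) ((e (z, f')) t.succ))]
      have hterm : ∀ t : Fin N,
          F t.castSucc.val ((e (z, f')) t.castSucc.castSucc) ((e (z, f')) t.castSucc.succ)
          = F t.val (f' t.castSucc) (f' t.succ) := by
        intro t
        have h1 : (e (z, f')) t.castSucc.castSucc = f' t.castSucc := hcs t.castSucc
        have h2 : (e (z, f')) t.castSucc.succ = f' t.succ := hcs t.succ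
        rw [h1, h2]
        rfl
      rw [Finset.prod_congr rfl (fun t _ => hterm t)]
      have hN : F (Fin.last N).val ((e (z, f')) (Fin.last N).castSucc)
          ((e (z, f')) (Fin.last N).succ) = F N (f' ⟨N, Nat.lt_succ_self N⟩) z := by
        have h1 : (e (z, f')) (Fin.last N).castSucc = f' (Fin.last N) := hcs (Fin.last N)
        have h2 : (e (z, f')) (Fin.last N).succ = z := hlast
        rw [h1, h2]; rfl
      rw [hN]; ring
    refine Eq.trans (Finset.sum_congr rfl (fun z _ =>
      Finset.sum_congr rfl (fun f' _ => key z f'))) ?_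
    rw [Finset.sum_comm]
    calc ∑ f' : (t : Fin (N+1)) → κ t.val, ∑ z : κ (N+1),
            ((w (f' ⟨0, Nat.succ_pos N⟩) * ∏ t : Fin N, F t.val (f' t.castSucc) (f' t.succ))
              * (F N (f' ⟨N, Nat.lt_succ_self N⟩) z * ψ z))
        = ∑ f' : (t : Fin (N+1)) → κ t.val,
            ((w (f' ⟨0, Nat.succ_pos N⟩) * ∏ t : Fin N, F t.val (f' t.castSucc) (f' t.succ))
              * (∑ z : κ (N+1), F N (f' ⟨N, Nat.lt_succ_self N⟩) z * ψ z)) := by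
          refine Finset.sum_congr rfl (fun f' _ => ?_); rw [Finset.mul_sum]
      _ = ∑ y : κ N, chainVec k F w N y * (∑ z : κ (N+1), F N y z * ψ z) :=
          IH w (fun y => ∑ z : κ (N+1), F N y z * ψ z)
      _ = ∑ z : κ (N+1), chainVec k F w (N+1) z * ψ z := by
          simp only [Finset.mul_sum]
          rw [Finset.sum_comm]
          refine Finset.sum_congr rfl (fun z _ => ?_)
          rw [chainVec, Finset.sum_mul]
          refine Finset.sum_congr rfl (fun y _ => ?_)
          ring

end Chain

/-! ### bases and cast plumbing -/

section Aux

variable (k : Type*) [Field k] {r : ℕ} [NeZero r]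
variable (V : Fin r → Type*) [∀ i, AddCommGroup (V i)] [∀ i, Module k (V i)]
  [∀ i, FiniteDimensional k (V i)]

abbrev ιx (i : Fin r) : Type := Fin (Module.finrank k (V i))

noncomputable def bb (i : Fin r) : Basis (ιx k V i) k (V i) := Module.finBasis k (V i)

noncomputable def coordML (f : ∀ i, ιx k V i) : MultilinearMap k V k :=
  (MultilinearMap.mkPiAlgebra k (Fin r) k).compLinearMap (fun i => (bb k V i).coord (f i))

lemma coordML_apply (f : ∀ i, ιx k V i) (v : ∀ i, V i) :
    coordML k V f v = ∏ i, (bb k V i).repr (v i) (f i) := by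
  simp [coordML, Basis.coord_apply]

noncomputable def PsiF : PiTensorProduct k V →ₗ[k] ((∀ i, ιx k V i) →₀ k) :=
  (Finsupp.linearEquivFunOnFinite k k _).symm.toLinearMap ∘ₗ
    (LinearMap.pi fun f => PiTensorProduct.lift (coordML k V f))

lemma PsiF_tprod (v : ∀ i, V i) (f : ∀ i, ιx k V i) :
    PsiF k V (PiTensorProduct.tprod k v) f = ∏ i, (bb k V i).repr (v i) (f i) := by
  simp [PsiF, coordML_apply, Finsupp.linearEquivFunOnFinite]

noncomputable def Theta : ((∀ i, ιx k V i) →₀ k) →ₗ[k] PiTensorProduct k V :=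
  Finsupp.linearCombination k (fun f => PiTensorProduct.tprod k (fun i => bb k V i (f i)))

lemma tprod_expand (v : ∀ i, V i) :
    PiTensorProduct.tprod k v
      = ∑ f : (∀ i, ιx k V i), (∏ i, (bb k V i).repr (v i) (f i)) •
          PiTensorProduct.tprod k (fun i => bb k V i (f i)) := by
  have h1 : PiTensorProduct.tprod k v
      = PiTensorProduct.tprod k (fun i => ∑ y, (bb k V i).repr (v i) y • bb k V i y) := by
    congr 1; funext i; rw [Basis.sum_repr]
  rw [h1, MultilinearMap.map_sum]
  refine Finset.sum_congr rfl fun f _ => ?_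
  rw [MultilinearMap.map_smul_univ]

lemma Theta_PsiF : Theta k V ∘ₗ PsiF k V = LinearMap.id := by
  ext v
  simp only [LinearMap.comp_apply, LinearMap.compMultilinearMap_apply, LinearMap.id_apply]
  rw [Theta, Finsupp.linearCombination_apply, Finsupp.sum_fintype]
  · conv_rhs => rw [tprod_expand k V v]
    refine Finset.sum_congr rfl fun f _ => ?_
    rw [PsiF_tprod]
  · intro f; exact zero_smul _ _

lemma PsiF_Theta : PsiF k V ∘ₗ Theta k V = LinearMap.id := by
  ext f f'
  simp only [LinearMap.comp_apply, LinearMap.id_apply, Theta,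
    Finsupp.linearCombination_single, one_smul, Finsupp.lsingle_apply]
  rw [PsiF_tprod]
  simp only [Basis.repr_self]
  rw [Finsupp.single_apply]
  by_cases h : f = f'
  · subst h; simp
  · rw [if_neg h]
    have : ∃ i, f i ≠ f' i := by
      by_contra hc; push_neg at hc; exact h (funext hc)
    obtain ⟨i, hi⟩ := this
    apply Finset.prod_eq_zero (Finset.mem_univ i)
    rw [Finsupp.single_apply, if_neg hi]

noncomputable def tpBasis : Basis (∀ i, ιx k V i) k (PiTensorProduct k V) :=
  Basis.ofRepr (LinearEquiv.ofLinear (PsiF k V) (Theta k V) (PsiF_Theta k V) (Theta_PsiF k V))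

lemma tpBasis_repr_tprod (v : ∀ i, V i) (f : ∀ i, ιx k V i) :
    (tpBasis k V).repr (PiTensorProduct.tprod k v) f = ∏ i, (bb k V i).repr (v i) (f i) :=
  PsiF_tprod k V v f

lemma tpBasis_apply (f : ∀ i, ιx k V i) :
    tpBasis k V f = PiTensorProduct.tprod k (fun i => bb k V i (f i)) := by
  rw [← (tpBasis k V).repr_symm_single_one]
  show Theta k V (Finsupp.single f 1) = _
  simp [Theta]

/-! #### casts -/

def eqv {i j : Fin r} (h : i = j) : V i ≃ₗ[k] V j :=
  Eq.rec (motive := fun j' _ => V i ≃ₗ[k] V j') (LinearEquiv.refl k (V i)) h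

def icx {i j : Fin r} (h : i = j) : ιx k V i ≃ ιx k V j :=
  Equiv.cast (congrArg (fun t => ιx k V t) h)

lemma icx_symm_apply {i j : Fin r} (h : i = j) (y : ιx k V j) :
    (icx k V h).symm y = icx k V h.symm y := by subst h; rfl

lemma icx_icx {i j l : Fin r} (h : i = j) (h' : j = l) (x : ιx k V i) :
    icx k V h' (icx k V h x) = icx k V (h.trans h') x := by subst h; subst h'; rfl

lemma icx_self {i : Fin r} (h : i = i) (x : ιx k V i) : icx k V h x = x := rfl

lemma app_icx {i i' : Fin r} (h : i = i') (f : ∀ j, ιx k V j) :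
    icx k V h (f i) = f i' := by subst h; rfl

lemma eqv_heq {i j : Fin r} (h : i = j) (x : V i) : HEq (eqv k V h x) x := by subst h; rfl

lemma b_eqv {i j : Fin r} (h : i = j) (y : ιx k V i) :
    eqv k V h (bb k V i y) = bb k V j (icx k V h y) := by subst h; rfl

lemma repr_eqv {i j : Fin r} (h : i = j) (u : V i) (y : ιx k V j) :
    (bb k V j).repr (eqv k V h u) y = (bb k V i).repr u ((icx k V h).symm y) := by
  subst h; rfl

lemma repr_map_expand {i j : Fin r} (L : V i →ₗ[k] V j) (u : V i) (y : ιx k V j) :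
    (bb k V j).repr (L u) y
      = ∑ z, (bb k V i).repr u z * (bb k V j).repr (L (bb k V i z)) y := by
  conv_lhs => rw [← Basis.sum_repr (bb k V i) u]
  rw [map_sum, map_sum]
  simp [Finsupp.smul_apply, smul_eq_mul]

/-! #### the cycle maps -/

variable (T : (i : Fin r) → V i →ₗ[k] V (i + 1)) (G : (i : Fin r) → V i →ₗ[k] V i)

noncomputable def Am (i : Fin r) : V i →ₗ[k] V (i+1) := (G (i+1)).comp (T i)

lemma Am_heq {i i' : Fin r} (h : i = i') {x : V i} {x' : V i'} (hx : HEq x x') :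
    HEq (Am k V T G i x) (Am k V T G i' x') := by subst h; rw [eq_of_heq hx]

noncomputable def mEnt (i : Fin r) (z : ιx k V i) (y : ιx k V (i+1)) : k :=
  (bb k V (i+1)).repr (Am k V T G i (bb k V i z)) y

lemma mEnt_congr {i i' : Fin r} (p : i = i') (z : ιx k V i) (y : ιx k V (i+1)) :
    mEnt k V T G i z y
      = mEnt k V T G i' (icx k V p z) (icx k V (by rw [p]) y) := by subst p; rfl

lemma hcr (n : ℕ) : ((n : Fin r)) + 1 = ((n+1 : ℕ) : Fin r) := (Nat.cast_add_one n).symm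

lemma h00r : (0 : Fin r) = ((0:ℕ) : Fin r) := Nat.cast_zero.symm

noncomputable def W : (n : ℕ) → (V 0 →ₗ[k] V ((n : ℕ) : Fin r))
  | 0 => (eqv k V (h00r (r := r))).toLinearMap
  | (n+1) => (eqv k V (hcr (r := r) n)).toLinearMap ∘ₗ (Am k V T G (n : Fin r)) ∘ₗ W n

lemma W_congr {n n' : ℕ} (h : n = n') (v : V 0) :
    HEq (W k V T G n v) (W k V T G n' v) := by subst h; rfl

noncomputable def Fc (n : ℕ) (z : ιx k V ((n : ℕ) : Fin r))
    (y : ιx k V ((n+1 : ℕ) : Fin r)) : k :=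
  (bb k V ((n+1 : ℕ) : Fin r)).repr
    (eqv k V (hcr (r := r) n) (Am k V T G (n : Fin r) (bb k V (n : Fin r) z))) y

lemma Fc_eq (n : ℕ) (z : ιx k V ((n : ℕ) : Fin r)) (y : ιx k V ((n+1 : ℕ) : Fin r)) :
    Fc k V T G n z y
      = mEnt k V T G ((n : ℕ) : Fin r) z ((icx k V (hcr (r := r) n)).symm y) := by
  rw [Fc, repr_eqv]; rfl

lemma VECW (n : ℕ) (v0 : V 0) (z : ιx k V ((n : ℕ) : Fin r)) :
    (bb k V ((n : ℕ) : Fin r)).repr (W k V T G n v0) z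
      = chainVec k (κ := fun t => ιx k V ((t : ℕ) : Fin r)) (Fc k V T G)
          (fun z0 => (bb k V ((0:ℕ) : Fin r)).repr (W k V T G 0 v0) z0) n z := by
  induction n with
  | zero => rfl
  | succ n IH =>
    show (bb k V (((n+1:ℕ)) : Fin r)).repr
        (((eqv k V (hcr (r := r) n)).toLinearMap ∘ₗ (Am k V T G (n : Fin r))) (W k V T G n v0)) z = _
    rw [repr_map_expand k V ((eqv k V (hcr (r := r) n)).toLinearMap ∘ₗ (Am k V T G (n : Fin r)))
      (W k V T G n v0) z]
    rw [chainVec]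
    refine Finset.sum_congr rfl (fun z' _ => ?_)
    rw [IH]
    rfl

lemma uf_term (f : ∀ j, ιx k V j) (i : Fin r) :
    (bb k V (i+1)).repr
      (eqv k V (sub_add_cancel (i+1) 1)
        (Am k V T G ((i+1)-1) (bb k V ((i+1)-1) (f ((i+1)-1))))) (f (i+1))
    = mEnt k V T G i (f i) (f (i+1)) := by
  rw [repr_eqv]
  rw [show (bb k V (((i+1)-1)+1)).repr
      (Am k V T G ((i+1)-1) (bb k V ((i+1)-1) (f ((i+1)-1))))
      ((icx k V (sub_add_cancel (i+1) 1)).symm (f (i+1)))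
    = mEnt k V T G ((i+1)-1) (f ((i+1)-1))
        ((icx k V (sub_add_cancel (i+1) 1)).symm (f (i+1))) from rfl]
  rw [mEnt_congr k V T G (add_sub_cancel_right i 1)]
  rw [app_icx, icx_symm_apply, icx_icx, icx_self]

end Aux

end Stmt9Aux

open Stmt9Aux Module Fin.NatCast

/-- Lemma 1.7 (linear-algebra content): the trace of the cyclically-shifted tensor
map `Φ : v₁ ⊗ ⋯ ⊗ v_r ↦ g(T_r v_r) ⊗ T₁ v₁ ⊗ ⋯ ⊗ T_{r−1} v_{r−1}` on
`V₁ ⊗ ⋯ ⊗ V_r` equals the trace of `g ∘ T_r ∘ ⋯ ∘ T₁` on `V₁`.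
Here (0-indexed) `G i` is `g` at `i = 0` and the identity otherwise, `Φ` is
characterized on pure tensors, and `C` is characterized as the once-around-the-cycle
composite `g ∘ T_{r−1} ∘ ⋯ ∘ T₀`. -/
theorem stmt9 {k : Type*} [Field k] (r : ℕ) [NeZero r]
    (V : Fin r → Type*) [∀ i, AddCommGroup (V i)] [∀ i, Module k (V i)]
    [∀ i, FiniteDimensional k (V i)]
    (T : (i : Fin r) → V i →ₗ[k] V (i + 1))
    (g : V 0 →ₗ[k] V 0)
    (G : (i : Fin r) → V i →ₗ[k] V i)
    (hG0 : G 0 = g) (hGi : ∀ i : Fin r, i ≠ 0 → G i = LinearMap.id)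
    (Φ : PiTensorProduct k V →ₗ[k] PiTensorProduct k V)
    (hΦ : ∀ v u : (i : Fin r) → V i,
      (∀ i : Fin r, u (i + 1) = G (i + 1) (T i (v i))) →
      Φ (PiTensorProduct.tprod k v) = PiTensorProduct.tprod k u)
    (C : V 0 →ₗ[k] V 0)
    (hC : ∀ s u : (i : Fin r) → V i,
      (∀ j : Fin r, j ≠ 0 → s j = u j) →
      (∀ i : Fin r, u (i + 1) = G (i + 1) (T i (s i))) →
      C (s 0) = u 0) :
    LinearMap.trace k (PiTensorProduct k V) Φ = LinearMap.trace k (V 0) C := by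
  classical
  obtain ⟨N, rfl⟩ : ∃ N, r = N + 1 :=
    ⟨r - 1, (Nat.succ_pred_eq_of_pos (Nat.pos_of_ne_zero (NeZero.ne r))).symm⟩
  -- index cast proofs used throughout
  have hlast : (0 : Fin (N+1)) - 1 = Fin.last N := by
    rw [sub_eq_iff_eq_add]; exact (Fin.last_add_one N).symm
  have e1 : (((N:ℕ)) : Fin (N+1)) = 0 - 1 := by
    rw [hlast]; exact Fin.cast_val_eq_self (Fin.last N)
  have sac0 : (0 : Fin (N+1)) - 1 + 1 = 0 := sub_add_cancel 0 1
  -- Step 1 : trace of Φ as a cyclic sum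
  have step1 : LinearMap.trace k (PiTensorProduct k V) Φ
      = ∑ f : (∀ i, ιx k V i), ∏ i, mEnt k V T G i (f i) (f (i+1)) := by
    rw [LinearMap.trace_eq_matrix_trace k (tpBasis k V) Φ, Matrix.trace]
    refine Finset.sum_congr rfl (fun f _ => ?_)
    rw [Matrix.diag_apply, LinearMap.toMatrix_apply, tpBasis_apply]
    have hu : ∀ i : Fin (N+1),
        (fun j => eqv k V (sub_add_cancel j 1)
          (Am k V T G (j-1) (bb k V (j-1) (f (j-1))))) (i+1)
        = G (i+1) (T i (bb k V i (f i))) := by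
      intro i
      exact eq_of_heq ((eqv_heq k V _ _).trans
        (Am_heq k V T G (add_sub_cancel_right i 1)
          (heq_app (fun j => bb k V j (f j)) (add_sub_cancel_right i 1))))
    rw [hΦ (fun i => bb k V i (f i))
      (fun j => eqv k V (sub_add_cancel j 1)
        (Am k V T G (j-1) (bb k V (j-1) (f (j-1))))) hu, tpBasis_repr_tprod]
    exact (Fintype.prod_equiv (Equiv.addRight (1 : Fin (N+1)))
      (fun i => mEnt k V T G i (f i) (f (i+1)))
      (fun j => (bb k V j).repr
        (eqv k V (sub_add_cancel j 1)
          (Am k V T G (j-1) (bb k V (j-1) (f (j-1))))) (f j))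
      (fun i => (uf_term k V T G f i).symm)).symm
  -- the wrap-around map
  have hCeq : ∀ v0 : V 0,
      C v0 = ((eqv k V sac0).toLinearMap ∘ₗ Am k V T G (0-1) ∘ₗ
        (eqv k V e1).toLinearMap) (W k V T G N v0) := by
    intro v0
    set s : ∀ j : Fin (N+1), V j :=
      fun j => eqv k V (Fin.cast_val_eq_self j) (W k V T G j.val v0) with hs
    set u : ∀ j : Fin (N+1), V j :=
      fun j => eqv k V (sub_add_cancel j 1) (Am k V T G (j-1) (s (j-1))) with hu
    have h1 : ∀ j : Fin (N+1), j ≠ 0 → s j = u j := by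
      intro j hj
      have hjv : j.val ≠ 0 := by
        intro h; exact hj (Fin.ext h)
      have hv : (j - 1).val + 1 = j.val := by
        rw [Fin.coe_sub_one, if_neg hj]; omega
      refine eq_of_heq (((eqv_heq k V _ _).trans ?_).trans (eqv_heq k V _ _).symm)
      refine (W_congr k V T G hv.symm v0).trans ?_
      refine (eqv_heq k V (hcr (r := N+1) (j-1).val) _).trans ?_
      exact Am_heq k V T G (Fin.cast_val_eq_self (j-1)) (eqv_heq k V _ _).symm
    have h2 : ∀ i : Fin (N+1), u (i+1) = G (i+1) (T i (s i)) := by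
      intro i
      exact eq_of_heq ((eqv_heq k V _ _).trans
        (Am_heq k V T G (add_sub_cancel_right i 1)
          (heq_app s (add_sub_cancel_right i 1))))
    have key := hC s u h1 h2
    have hs0 : s 0 = v0 :=
      eq_of_heq ((eqv_heq k V _ _).trans (eqv_heq k V (h00r (r := N+1)) v0))
    have hsm : s (0-1) = eqv k V e1 (W k V T G N v0) := by
      have hval : ((0:Fin (N+1)) - 1).val = N := by rw [hlast]; rfl
      exact eq_of_heq (((eqv_heq k V _ _).trans (W_congr k V T G hval v0)).trans
        (eqv_heq k V e1 _).symm)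
    rw [hs0] at key
    rw [key]
    show eqv k V (sub_add_cancel 0 1) (Am k V T G (0-1) (s (0-1))) = _
    rw [hsm]
    rfl
  -- Step 2 : trace of C as a chain sum
  have step2 : LinearMap.trace k (V 0) C
      = ∑ x : ιx k V 0, ∑ z : ιx k V (((N:ℕ)) : Fin (N+1)),
          chainVec k (κ := fun t => ιx k V ((t:ℕ) : Fin (N+1))) (Fc k V T G)
            (fun z0 => (bb k V (((0:ℕ)) : Fin (N+1))).repr (W k V T G 0 (bb k V 0 x)) z0) N z
          * (bb k V 0).repr
              (((eqv k V sac0).toLinearMap ∘ₗ Am k V T G (0-1) ∘ₗ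
                (eqv k V e1).toLinearMap) (bb k V (((N:ℕ)) : Fin (N+1)) z)) x := by
    rw [LinearMap.trace_eq_matrix_trace k (bb k V 0) C, Matrix.trace]
    refine Finset.sum_congr rfl (fun x _ => ?_)
    rw [Matrix.diag_apply, LinearMap.toMatrix_apply, hCeq (bb k V 0 x)]
    refine Eq.trans (repr_map_expand k V _ _ _) ?_
    refine Finset.sum_congr rfl (fun z _ => ?_)
    rw [VECW]
  -- Step 3 : the bridge
  have bridge : (∑ f : (∀ i, ιx k V i), ∏ i, mEnt k V T G i (f i) (f (i+1)))
      = ∑ x : ιx k V 0, ∑ z : ιx k V (((N:ℕ)) : Fin (N+1)),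
          chainVec k (κ := fun t => ιx k V ((t:ℕ) : Fin (N+1))) (Fc k V T G)
            (fun z0 => (bb k V (((0:ℕ)) : Fin (N+1))).repr (W k V T G 0 (bb k V 0 x)) z0) N z
          * (bb k V 0).repr
              (((eqv k V sac0).toLinearMap ∘ₗ Am k V T G (0-1) ∘ₗ
                (eqv k V e1).toLinearMap) (bb k V (((N:ℕ)) : Fin (N+1)) z)) x := by
    refine Eq.trans ?_ (Finset.sum_congr rfl (fun x _ =>
      chain k (κ := fun t => ιx k V ((t:ℕ) : Fin (N+1))) (Fc k V T G) N
        (fun z0 => (bb k V (((0:ℕ)) : Fin (N+1))).repr (W k V T G 0 (bb k V 0 x)) z0)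
        (fun z => (bb k V 0).repr
          (((eqv k V sac0).toLinearMap ∘ₗ Am k V T G (0-1) ∘ₗ
            (eqv k V e1).toLinearMap) (bb k V (((N:ℕ)) : Fin (N+1)) z)) x)))
    rw [Finset.sum_comm]
    refine Eq.trans ?_ (Equiv.sum_comp
      (Equiv.piCongrRight (fun t : Fin (N+1) => icx k V (Fin.cast_val_eq_self t).symm)) _)
    refine Finset.sum_congr rfl (fun f _ => ?_)
    -- abbreviation for the reindexed tuple
    set Ef : (t : Fin (N+1)) → ιx k V ((t.val : ℕ) : Fin (N+1)) :=
      (Equiv.piCongrRight (fun t : Fin (N+1) => icx k V (Fin.cast_val_eq_self t).symm)) f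
      with hEf
    -- the delta function coming from `W 0`
    have hw : ∀ x : ιx k V 0,
        (bb k V (((0:ℕ)) : Fin (N+1))).repr (W k V T G 0 (bb k V 0 x))
          (Ef ⟨0, Nat.succ_pos N⟩) = if x = f 0 then 1 else 0 := by
      intro x
      show (bb k V (((0:ℕ)) : Fin (N+1))).repr (eqv k V (h00r (r := N+1)) (bb k V 0 x))
          (icx k V (Fin.cast_val_eq_self (⟨0, Nat.succ_pos N⟩ : Fin (N+1))).symm
            (f ⟨0, Nat.succ_pos N⟩)) = _
      rw [b_eqv, Basis.repr_self, Finsupp.single_apply]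
      have harg : icx k V (Fin.cast_val_eq_self (⟨0, Nat.succ_pos N⟩ : Fin (N+1))).symm
            (f ⟨0, Nat.succ_pos N⟩)
          = icx k V (h00r (r := N+1)) (f 0) :=
        (app_icx k V _ f).trans (app_icx k V (h00r (r := N+1)) f).symm
      rw [harg]
      simp only [Equiv.apply_eq_iff_eq]
    -- the chain factors
    have hFc : ∀ t : Fin N,
        Fc k V T G t.val (Ef t.castSucc) (Ef t.succ)
        = mEnt k V T G t.castSucc (f t.castSucc) (f (t.castSucc + 1)) := by
      intro t
      rw [Fc_eq]
      rw [mEnt_congr k V T G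
        (show ((t.val : ℕ) : Fin (N+1)) = t.castSucc from Fin.cast_val_eq_self t.castSucc)]
      show mEnt k V T G t.castSucc
          (icx k V _ (icx k V (Fin.cast_val_eq_self t.castSucc).symm (f t.castSucc)))
          (icx k V _ ((icx k V (hcr (r := N+1) t.val)).symm
            (icx k V (Fin.cast_val_eq_self t.succ).symm (f t.succ)))) = _
      simp only [icx_symm_apply, icx_icx, app_icx, icx_self]
      exact congrArg (mEnt k V T G t.castSucc (f t.castSucc)) (app_icx k V _ f)
    -- the wrap factor
    have hψ : (bb k V 0).repr
          (((eqv k V sac0).toLinearMap ∘ₗ Am k V T G (0-1) ∘ₗ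
            (eqv k V e1).toLinearMap) (bb k V (((N:ℕ)) : Fin (N+1))
              (Ef ⟨N, Nat.lt_succ_self N⟩))) (f 0)
        = mEnt k V T G (Fin.last N) (f (Fin.last N)) (f (Fin.last N + 1)) := by
      show (bb k V 0).repr (eqv k V sac0 (Am k V T G (0-1) (eqv k V e1
          (bb k V (((N:ℕ)) : Fin (N+1))
            (icx k V (Fin.cast_val_eq_self (⟨N, Nat.lt_succ_self N⟩ : Fin (N+1))).symm
              (f ⟨N, Nat.lt_succ_self N⟩)))))) (f 0) = _
      rw [b_eqv, repr_eqv]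
      rw [show (bb k V ((0 : Fin (N+1))-1+1)).repr
            (Am k V T G (0-1) (bb k V (0-1) (icx k V e1
              (icx k V (Fin.cast_val_eq_self (⟨N, Nat.lt_succ_self N⟩ : Fin (N+1))).symm
                (f ⟨N, Nat.lt_succ_self N⟩)))))
            ((icx k V sac0).symm (f 0))
          = mEnt k V T G (0-1)
              (icx k V e1 (icx k V
                (Fin.cast_val_eq_self (⟨N, Nat.lt_succ_self N⟩ : Fin (N+1))).symm
                (f ⟨N, Nat.lt_succ_self N⟩)))
              ((icx k V sac0).symm (f 0)) from rfl]
      rw [mEnt_congr k V T G hlast]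
      simp only [icx_symm_apply, icx_icx, app_icx, icx_self]
    -- the delta-sum evaluation
    have hsum : ∀ (P : k) (ψf : ιx k V 0 → k),
        ∑ x : ιx k V 0, ((if x = f 0 then (1:k) else 0) * P) * ψf x = P * ψf (f 0) := by
      intro P ψf
      rw [Finset.sum_eq_single (f 0)]
      · rw [if_pos rfl, one_mul]
      · intro b _ hb; rw [if_neg hb, zero_mul, zero_mul]
      · intro h; exact absurd (Finset.mem_univ _) h
    calc ∏ i, mEnt k V T G i (f i) (f (i+1))
        = (∏ t : Fin N, mEnt k V T G t.castSucc (f t.castSucc) (f (t.castSucc+1)))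
            * mEnt k V T G (Fin.last N) (f (Fin.last N)) (f (Fin.last N + 1)) :=
          Fin.prod_univ_castSucc _
      _ = (∏ t : Fin N, Fc k V T G t.val (Ef t.castSucc) (Ef t.succ))
            * ((bb k V 0).repr
              (((eqv k V sac0).toLinearMap ∘ₗ Am k V T G (0-1) ∘ₗ
                (eqv k V e1).toLinearMap) (bb k V (((N:ℕ)) : Fin (N+1))
                  (Ef ⟨N, Nat.lt_succ_self N⟩))) (f 0)) := by
          rw [Finset.prod_congr rfl (fun t _ => hFc t), hψ]
      _ = ∑ x : ιx k V 0, ((if x = f 0 then (1:k) else 0)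
              * ∏ t : Fin N, Fc k V T G t.val (Ef t.castSucc) (Ef t.succ))
            * ((bb k V 0).repr
              (((eqv k V sac0).toLinearMap ∘ₗ Am k V T G (0-1) ∘ₗ
                (eqv k V e1).toLinearMap) (bb k V (((N:ℕ)) : Fin (N+1))
                  (Ef ⟨N, Nat.lt_succ_self N⟩))) x) := (hsum _ _).symm
      _ = ∑ x : ιx k V 0,
            ((bb k V (((0:ℕ)) : Fin (N+1))).repr (W k V T G 0 (bb k V 0 x))
              (Ef ⟨0, Nat.succ_pos N⟩)
              * ∏ t : Fin N, Fc k V T G t.val (Ef t.castSucc) (Ef t.succ))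
            * ((bb k V 0).repr
              (((eqv k V sac0).toLinearMap ∘ₗ Am k V T G (0-1) ∘ₗ
                (eqv k V e1).toLinearMap) (bb k V (((N:ℕ)) : Fin (N+1))
                  (Ef ⟨N, Nat.lt_succ_self N⟩))) x) :=
          Finset.sum_congr rfl (fun x _ => by rw [hw x])
  rw [step1, bridge, ← step2]
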